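/- Let M be a matroid with finite ground set E, rank(M) = r ≥ 1, and let k ≥ 0 be an integer. Let B ⊆ E be a k-fault-tolerant spanning set. Suppose X_0, X_1, …, X_k ⊆ B are pairwise disjoint sets such that X_0 is an inclusion-maximal independent subset of B and, for each i ∈ {1,…,k}, X_i is an inclusion-maximal independent subset of B \ (X_0 ∪ ⋯ ∪ X_{i-1}). Then B' = X_0 ∪ X_1 ∪ ⋯ ∪ X_k is also a k-fault-tolerant spanning set of M. -/

import Mathlib

open Set

/-- The rank of a set `X` in a matroid `M`: the maximum cardinality of an
independent subset of `X`. -/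
noncomputable def mrank {α : Type*} (M : Matroid α) (X : Set α) : ℕ :=
  sSup {n : ℕ | ∃ I, M.Indep I ∧ I ⊆ X ∧ I.ncard = n}

/-- `B` is a `k`-fault-tolerant spanning set of `M`: `B ⊆ M.E` and removing any
at most `k` elements from `B` leaves a set of full rank. -/
def FTSpanning {α : Type*} (M : Matroid α) (k : ℕ) (B : Set α) : Prop :=
  B ⊆ M.E ∧ ∀ F ⊆ B, F.ncard ≤ k → mrank M (B \ F) = mrank M M.E

/-- `B` is a `k`-fault-tolerant basis of `M`: a `k`-fault-tolerant spanning set of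
minimum cardinality among all `k`-fault-tolerant spanning sets. -/
def FTBasis {α : Type*} (M : Matroid α) (k : ℕ) (B : Set α) : Prop :=
  FTSpanning M k B ∧ ∀ B', FTSpanning M k B' → B.ncard ≤ B'.ncard

/-- `X` is `h`-uniform in `M`: `rank(X) = h` and every subset of `X` of size `h`
has rank `h`. -/
def HUniform {α : Type*} (M : Matroid α) (h : ℕ) (X : Set α) : Prop :=
  mrank M X = h ∧ ∀ Y ⊆ X, Y.ncard = h → mrank M Y = h

/-- `I` is an inclusion-maximal independent subset of `S` in `M`. -/
def MaxIndepIn {α : Type*} (M : Matroid α) (S : Set α) (I : Set α) : Prop :=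
  M.Indep I ∧ I ⊆ S ∧ ∀ J, M.Indep J → J ⊆ S → I ⊆ J → J = I


/-- If `I` is a basis of `X ⊆ M.E` with `M.E` finite, then `mrank M X = I.ncard`. -/
lemma mrank_eq_basis {α : Type*} {M : Matroid α} (hE : M.E.Finite) {X I : Set α}
    (hX : X ⊆ M.E) (hI : M.IsBasis I X) : mrank M X = I.ncard := by
  have hub : ∀ n ∈ {n : ℕ | ∃ J, M.Indep J ∧ J ⊆ X ∧ J.ncard = n}, n ≤ I.ncard := by
    rintro n ⟨J, hJ, hJX, rfl⟩
    obtain ⟨J', hJ', hJJ'⟩ := hJ.subset_isBasis_of_subset hJX hX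
    have hJ'fin : J'.Finite := hE.subset (hJ'.subset.trans hX)
    calc J.ncard ≤ J'.ncard := Set.ncard_le_ncard hJJ' hJ'fin
      _ = I.ncard := by
        have := hJ'.encard_eq_encard hI
        simp [Set.ncard, this]
  refine le_antisymm (csSup_le ⟨I.ncard, I, hI.indep, hI.subset, rfl⟩ hub) ?_
  exact le_csSup ⟨I.ncard, hub⟩ ⟨I, hI.indep, hI.subset, rfl⟩

/-- Monotonicity of `mrank` under closure containment. -/
lemma mrank_le_of_subset_closure {α : Type*} {M : Matroid α} (hE : M.E.Finite) {A P : Set α}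
    (hA : A ⊆ M.E) (hP : P ⊆ M.E) (hAP : A ⊆ M.closure P) : mrank M A ≤ mrank M P := by
  obtain ⟨I, hI⟩ := M.exists_isBasis A hA
  obtain ⟨J, hJ⟩ := M.exists_isBasis P hP
  rw [mrank_eq_basis hE hA hI, mrank_eq_basis hE hP hJ]
  have hJc : M.IsBasis J (M.closure P) := hJ.isBasis_closure_right
  obtain ⟨I', hI', hII'⟩ := hI.indep.subset_isBasis_of_subset (hI.subset.trans hAP)
    (M.closure_subset_ground P)
  have hI'fin : I'.Finite := hE.subset hI'.indep.subset_ground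
  calc I.ncard ≤ I'.ncard := Set.ncard_le_ncard hII' hI'fin
    _ = J.ncard := by
      have := hI'.encard_eq_encard hJc
      simp [Set.ncard, this]

/-- Pigeonhole: a set of at most `k` elements inside a union of `k+1` pairwise
disjoint sets must be disjoint from one of them. -/
lemma exists_disjoint_of_ncard_le {α : Type*} {k : ℕ} {F : Set α} (hFfin : F.Finite)
    (hF : F.ncard ≤ k) (X : Fin (k + 1) → Set α)
    (hdisj : Pairwise (Function.onFun Disjoint X)) : ∃ i, Disjoint (X i) F := by
  by_contra h
  push_neg at h
  have hch : ∀ i, ∃ x, x ∈ X i ∩ F := fun i =>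
    Set.not_disjoint_iff_nonempty_inter.mp (h i)
  choose f hf using hch
  have hinj : Function.Injective f := by
    intro i j hij
    by_contra hne
    exact (hdisj hne).ne_of_mem (hf i).1 (hij ▸ (hf j).1) rfl
  have hsub : Set.range f ⊆ F := by rintro x ⟨i, rfl⟩; exact (hf i).2
  have : (Set.range f).ncard = k + 1 := by
    rw [← Set.image_univ, Set.ncard_image_of_injective _ hinj, Set.ncard_univ]
    simp
  have := Set.ncard_le_ncard hsub hFfin
  omega

/-- If `B` is a `k`-fault-tolerant spanning set and `X 0, …, X k` are
pairwise disjoint sets with `X 0` an inclusion-maximal independent subset of `B` and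
each `X i` an inclusion-maximal independent subset of `B` minus the previous sets,
then the union of the `X i` is also a `k`-fault-tolerant spanning set. -/
theorem statement1 {α : Type*} (M : Matroid α) (hE : M.E.Finite)
    (r : ℕ) (hr : r = mrank M M.E) (hr1 : 1 ≤ r) (k : ℕ)
    (B : Set α) (hB : FTSpanning M k B)
    (X : Fin (k + 1) → Set α)
    (hdisj : Pairwise (Function.onFun Disjoint X))
    (hmax : ∀ i : Fin (k + 1), MaxIndepIn M (B \ ⋃ j < i, X j) (X i)) :
    FTSpanning M k (⋃ i, X i) := by
  obtain ⟨hBE, hBF⟩ := hB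
  have hXsub : ∀ i, X i ⊆ B := fun i => (hmax i).2.1.trans Set.diff_subset
  have hB'B : (⋃ i, X i) ⊆ B := Set.iUnion_subset hXsub
  refine ⟨hB'B.trans hBE, ?_⟩
  intro F hF hFk
  have hFB : F ⊆ B := hF.trans hB'B
  have hFfin : F.Finite := hE.subset (hFB.trans hBE)
  obtain ⟨i, hdisjF⟩ := exists_disjoint_of_ncard_le hFfin hFk X hdisj
  set S : Set α := B \ ⋃ j < i, X j with hS
  have hSE : S ⊆ M.E := Set.diff_subset.trans hBE
  have hXi : M.IsBasis (X i) S := by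
    obtain ⟨hind, hsub, hmax'⟩ := hmax i
    exact hind.isBasis_of_maximal_subset hsub (fun J hJ hIJ hJX => (hmax' J hJ hJX hIJ).le) hSE
  have hB'F : (⋃ j, X j) \ F ⊆ M.E := Set.diff_subset.trans (hB'B.trans hBE)
  have hkey : B \ F ⊆ M.closure ((⋃ j, X j) \ F) := by
    intro e he
    by_cases hmem : ∃ j, e ∈ X j
    · obtain ⟨j, hj⟩ := hmem
      exact M.subset_closure _ hB'F ⟨Set.mem_iUnion.mpr ⟨j, hj⟩, he.2⟩
    · push_neg at hmem
      have heS : e ∈ S := ⟨he.1, by simp only [Set.mem_iUnion]; rintro ⟨j, -, hj⟩; exact hmem j hj⟩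
      have h2 : X i ⊆ (⋃ j, X j) \ F := fun x hx =>
        ⟨Set.mem_iUnion.mpr ⟨i, hx⟩, fun hxF => hdisjF.ne_of_mem hx hxF rfl⟩
      exact M.closure_subset_closure h2 (hXi.subset_closure heS)
  have h1 : mrank M (B \ F) ≤ mrank M ((⋃ j, X j) \ F) :=
    mrank_le_of_subset_closure hE (fun x hx => hBE hx.1) hB'F hkey
  have h2 : mrank M ((⋃ j, X j) \ F) ≤ mrank M M.E :=
    mrank_le_of_subset_closure hE hB'F subset_rfl (hB'F.trans (M.subset_closure _ subset_rfl))
  have h3 := hBF F hFB hFk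
  omega
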